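/- For any ring R, the Laurent polynomial element 1 + x is not nil-clean in R[x, x^{-1}]; in particular, R[x, x^{-1}] is not a GNC ring. -/

import Mathlib

/-- An element is nil-clean if it is the sum of an idempotent and a nilpotent. -/
def IsNilClean {R : Type*} [Ring R] (a : R) : Prop :=
  ∃ e q : R, IsIdempotentElem e ∧ IsNilpotent q ∧ a = e + q

/-- A ring is GNC (generalized nil-clean) if every non-unit is nil-clean. -/
def IsGNC (R : Type*) [Ring R] : Prop :=
  ∀ a : R, ¬ IsUnit a → IsNilClean a

open LaurentPolynomial Polynomial

lemma one_add_T_not_nilclean {R : Type*} [Ring R] [Nontrivial R] :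
    ¬ IsNilClean ((1 + LaurentPolynomial.T 1 : LaurentPolynomial R)) := by
  rintro ⟨e, q, he, ⟨n, hq⟩, heq⟩
  -- q = T 1 + (1 - e)
  have hqe : q = T 1 + (1 - e) := by
    apply add_left_cancel (a := e)
    rw [← heq]; abel
  have hcT : Commute (T 1 + 1 : LaurentPolynomial R) q := by
    exact Commute.add_left (commute_T 1 q) (Commute.one_left q)
  -- powers times e
  have hpe : ∀ m : ℕ, q ^ m * e = T 1 ^ m * e := by
    intro m
    induction m with
    | zero => simp
    | succ m ih =>
      have h1 : q * e = T 1 * e := by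
        rw [hqe, add_mul, sub_mul, one_mul, he]
        abel
      have h2 : Commute (T 1 : LaurentPolynomial R) (q ^ m) :=
        (commute_T 1 q).pow_right m
      calc q ^ (m + 1) * e = q ^ m * (q * e) := by rw [pow_succ, mul_assoc]
        _ = q ^ m * (T 1 * e) := by rw [h1]
        _ = (q ^ m * T 1) * e := by rw [mul_assoc]
        _ = (T 1 * q ^ m) * e := by rw [h2.eq]
        _ = T 1 * (q ^ m * e) := by rw [mul_assoc]
        _ = T 1 * (T 1 ^ m * e) := by rw [ih]
        _ = T 1 ^ (m + 1) * e := by rw [pow_succ', mul_assoc]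
  -- powers times (1 - e)
  have hpf : ∀ m : ℕ, q ^ m * (1 - e) = (T 1 + 1) ^ m * (1 - e) := by
    intro m
    induction m with
    | zero => simp
    | succ m ih =>
      have hf : IsIdempotentElem (1 - e) := he.one_sub
      have h1 : q * (1 - e) = (T 1 + 1) * (1 - e) := by
        rw [hqe, add_mul, add_mul, hf, one_mul]
      have h2 : Commute (T 1 + 1 : LaurentPolynomial R) (q ^ m) := hcT.pow_right m
      calc q ^ (m + 1) * (1 - e) = q ^ m * (q * (1 - e)) := by rw [pow_succ, mul_assoc]
        _ = q ^ m * ((T 1 + 1) * (1 - e)) := by rw [h1]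
        _ = (q ^ m * (T 1 + 1)) * (1 - e) := by rw [mul_assoc]
        _ = ((T 1 + 1) * q ^ m) * (1 - e) := by rw [h2.eq]
        _ = (T 1 + 1) * (q ^ m * (1 - e)) := by rw [mul_assoc]
        _ = (T 1 + 1) * ((T 1 + 1) ^ m * (1 - e)) := by rw [ih]
        _ = (T 1 + 1) ^ (m + 1) * (1 - e) := by rw [pow_succ', mul_assoc]
  -- deduce e = 0
  have h1 : T 1 ^ n * e = 0 := by rw [← hpe n, hq, zero_mul]
  have he0 : e = 0 := by
    have : (T (-(n : ℤ)) : LaurentPolynomial R) * (T 1 ^ n * e) = e := by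
      rw [T_pow, ← mul_assoc, ← T_add]
      simp
    rw [h1, mul_zero] at this
    exact this.symm
  -- deduce (T 1 + 1) ^ n = 0
  have h2 : (T 1 + 1 : LaurentPolynomial R) ^ n = 0 := by
    have := hpf n
    rw [hq, he0, sub_zero, zero_mul, mul_one] at this
    exact this.symm
  -- contradiction via toLaurent and constant coefficient
  have h3 : ((X + 1 : R[X]) ^ n) = 0 := by
    apply Polynomial.toLaurent_injective
    rw [map_pow, map_add, Polynomial.toLaurent_X, Polynomial.toLaurent_one, h2, map_zero]
  have h4 := congrArg Polynomial.constantCoeff h3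
  rw [map_pow, map_add, map_one, Polynomial.constantCoeff_apply, Polynomial.coeff_X_zero,
    zero_add, one_pow, map_zero] at h4
  exact one_ne_zero h4

lemma one_add_T_not_unit {R : Type*} [Ring R] [Nontrivial R] :
    ¬ IsUnit ((1 + LaurentPolynomial.T 1 : LaurentPolynomial R)) := by
  intro hu
  -- evaluation at -1
  set u : Rˣ := -1 with hu'
  have hcomm : ∀ (x : R) (y : Multiplicative ℤ),
      Commute ((RingHom.id R) x) (((Units.coeHom R).comp (zpowersHom Rˣ u)) y) := by
    intro x y
    have : ((Units.coeHom R).comp (zpowersHom Rˣ u)) y = ((u ^ Multiplicative.toAdd y : Rˣ) : R) := rfl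
    rw [this]
    rcases Int.even_or_odd (Multiplicative.toAdd y) with hev | hod
    · rw [hu', hev.neg_one_zpow, Units.val_one]
      exact Commute.one_right x
    · obtain ⟨k, hk⟩ := hod
      have h2k : ((-1 : Rˣ)) ^ (2 * k) = 1 := Even.neg_one_zpow (⟨k, two_mul k⟩ : Even (2 * k))
      rw [hk, zpow_add, zpow_one, hu', h2k, one_mul, Units.val_neg, Units.val_one]
      exact (Commute.one_right x).neg_right
  set φ : LaurentPolynomial R →+* R :=
    AddMonoidAlgebra.liftNCRingHom (RingHom.id R) ((Units.coeHom R).comp (zpowersHom Rˣ u)) hcomm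
    with hφ
  have hT : φ (T 1) = -1 := by
    show AddMonoidAlgebra.liftNC _ _ (AddMonoidAlgebra.single (1 : ℤ) (1 : R)) = -1
    rw [AddMonoidAlgebra.liftNC_single]
    simp [u, zpowersHom_apply]
  have h0 : φ (1 + T 1) = 0 := by rw [map_add, map_one, hT]; simp
  have := hu.map φ
  rw [h0] at this
  exact not_isUnit_zero this

theorem laurent_not_gnc {R : Type*} [Ring R] [Nontrivial R] :
    ¬ IsNilClean ((1 + LaurentPolynomial.T 1 : LaurentPolynomial R)) ∧
      ¬ IsGNC (LaurentPolynomial R) := by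
  refine ⟨one_add_T_not_nilclean, fun h => one_add_T_not_nilclean (h _ one_add_T_not_unit)⟩
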